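/- Let $X_1, \dots, X_n$ be random variables such that for every subset $I \subset \{1,\dots,n\}$ and all $u_i \ge C_2$ ($i \in I$) one has $\mathbb{P}(\bigcap_{i \in I} \{|X_i| \ge C_1 u_i\}) \le \exp(-\sum_{i \in I} u_i)$. Let $\mathcal{E}_1, \dots, \mathcal{E}_n$ be independent symmetric standard exponential random variables ($\mathbb{P}(|\mathcal{E}_i| \ge u) = e^{-u}$ for $u \ge 0$). Then for every $I \subset \{1,\dots,n\}$ and nonnegative integers $k_i$, $\mathbb{E}\big[\prod_{i \in I} |X_i|^{2k_i} \prod_{i \in I} 1_{\{|X_i| > C_1 C_2\}}\big] \le C_1^{2\sum_{i \in I} k_i} \, \mathbb{E} \prod_{i \in I} |\mathcal{E}_i|^{2k_i}$. -/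

import Mathlib

open MeasureTheory Real ProbabilityTheory
open scoped ProbabilityTheory
open Set

lemma auxA {m : ℕ} (hm : 1 ≤ m) :
    ∫⁻ t in Set.Ioi (0:ℝ), ENNReal.ofReal ((m : ℝ) * t ^ (m - 1) * Real.exp (-t))
      = ENNReal.ofReal ((m.factorial : ℝ)) := by
  have hmpos : (0:ℝ) < m := by exact_mod_cast hm
  have hcast : ((m:ℝ) - 1) = ((m - 1 : ℕ) : ℝ) := by
    push_cast [Nat.cast_sub hm]; ring
  have hInt : IntegrableOn (fun x : ℝ => Real.exp (-x) * x ^ (m - 1)) (Ioi 0) := by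
    have := Real.GammaIntegral_convergent (s := (m:ℝ)) hmpos
    refine this.congr_fun (fun x hx => ?_) measurableSet_Ioi
    simp only [hcast, Real.rpow_natCast]
  have hGamma : ∫ x in Ioi (0:ℝ), Real.exp (-x) * x ^ (m - 1) = ((m - 1).factorial : ℝ) := by
    have h1 := Real.Gamma_eq_integral (s := (m:ℝ)) hmpos
    have h2 : Real.Gamma ((m:ℝ)) = ((m-1).factorial : ℝ) := by
      have := Real.Gamma_nat_eq_factorial (m - 1)
      rw [show (((m - 1 : ℕ) : ℝ) + 1) = (m : ℝ) by push_cast [Nat.cast_sub hm]; ring] at this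
      exact this
    rw [h2] at h1
    rw [h1]
    refine setIntegral_congr_fun measurableSet_Ioi (fun x hx => ?_)
    rw [hcast, Real.rpow_natCast]
  have hInt2 : IntegrableOn (fun t : ℝ => (m : ℝ) * t ^ (m - 1) * Real.exp (-t)) (Ioi 0) := by
    have : IntegrableOn (fun x : ℝ => (m:ℝ) * (Real.exp (-x) * x ^ (m - 1))) (Ioi 0) := hInt.const_mul (m : ℝ)
    refine this.congr_fun (fun x hx => ?_) measurableSet_Ioi
    ring
  rw [← MeasureTheory.ofReal_integral_eq_lintegral_ofReal hInt2]
  · congr 1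
    rw [show (fun t : ℝ => (m : ℝ) * t ^ (m-1) * Real.exp (-t))
        = (fun t : ℝ => (m : ℝ) * (Real.exp (-t) * t ^ (m-1))) by funext t; ring]
    rw [integral_const_mul, hGamma, ← Nat.cast_mul, Nat.mul_factorial_pred (by omega)]
  · filter_upwards [self_mem_ae_restrict measurableSet_Ioi] with x hx
    have : (0:ℝ) < x := hx
    positivity

lemma auxA' {m : ℕ} (hm : 1 ≤ m) {z : ℝ} (hz : 0 ≤ z) :
    ∫⁻ t in Set.Ioc (0:ℝ) z, ENNReal.ofReal ((m : ℝ) * t ^ (m - 1))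
      = ENNReal.ofReal (z ^ m) := by
  have hInt : IntegrableOn (fun t : ℝ => (m : ℝ) * t ^ (m - 1)) (Ioc 0 z) := by
    apply Continuous.integrableOn_Ioc; continuity
  rw [← MeasureTheory.ofReal_integral_eq_lintegral_ofReal hInt]
  · congr 1
    rw [← intervalIntegral.integral_of_le hz, intervalIntegral.integral_const_mul,
      integral_pow]
    have : ((m:ℝ) - 1) + 1 = (m:ℝ) := by ring
    rw [show (m - 1 + 1 : ℕ) = m from by omega]
    rw [show (((m-1:ℕ):ℝ) + 1) = (m:ℝ) from by push_cast [Nat.cast_sub hm]; ring]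
    field_simp
    rw [zero_pow (by omega), sub_zero]
  · filter_upwards [self_mem_ae_restrict measurableSet_Ioc] with x hx
    have : (0:ℝ) < x := hx.1
    positivity

lemma auxB {m : ℕ} (hm : 1 ≤ m) {c z : ℝ} (hc : 0 ≤ c) (hz : 0 ≤ z) :
    ∫⁻ t in Set.Ioi (0:ℝ),
        ENNReal.ofReal ((m : ℝ) * t ^ (m - 1)) * (if max t c ≤ z then 1 else 0)
      = ENNReal.ofReal (z ^ m * (if c ≤ z then 1 else 0)) := by
  by_cases hcz : c ≤ z
  · rw [if_pos hcz, mul_one]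
    have hpt : ∀ t : ℝ, ENNReal.ofReal ((m : ℝ) * t ^ (m - 1)) * (if max t c ≤ z then 1 else 0)
        = (Iic z).indicator (fun t => ENNReal.ofReal ((m : ℝ) * t ^ (m - 1))) t := by
      intro t
      by_cases ht : t ≤ z
      · rw [if_pos (max_le ht hcz), Set.indicator_of_mem (by exact ht), mul_one]
      · rw [if_neg (fun h => ht (le_trans (le_max_left _ _) h)),
          Set.indicator_of_notMem (by exact ht), mul_zero]
    simp_rw [hpt]
    rw [lintegral_indicator measurableSet_Iic, Measure.restrict_restrict measurableSet_Iic,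
      Set.Iic_inter_Ioi]
    exact auxA' hm hz
  · rw [if_neg hcz, mul_zero, ENNReal.ofReal_zero]
    have hpt : ∀ t : ℝ, ENNReal.ofReal ((m : ℝ) * t ^ (m - 1)) * (if max t c ≤ z then 1 else 0)
        = 0 := by
      intro t
      rw [if_neg (fun h => hcz (le_trans (le_max_right _ _) h)), mul_zero]
    simp_rw [hpt]
    simp

lemma auxC {Ω : Type*} [MeasurableSpace Ω] (μ : Measure Ω) [SFinite μ]
    {Y : Ω → ℝ} (hY : Measurable Y) (hY0 : ∀ ω, 0 ≤ Y ω)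
    {F : Ω → ENNReal} (hF : Measurable F) (hFt : ∀ ω, F ω ≠ ⊤)
    {m : ℕ} (hm : 1 ≤ m) {c : ℝ} (hc : 0 ≤ c) :
    ∫⁻ ω, ENNReal.ofReal ((Y ω) ^ m * (if c ≤ Y ω then 1 else 0)) * F ω ∂μ
      = ∫⁻ t in Set.Ioi (0:ℝ), ENNReal.ofReal ((m : ℝ) * t ^ (m - 1)) *
          ∫⁻ ω in {ω | max t c ≤ Y ω}, F ω ∂μ := by
  have step1 : ∀ ω, ENNReal.ofReal ((Y ω) ^ m * (if c ≤ Y ω then 1 else 0)) * F ω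
      = ∫⁻ t in Set.Ioi (0:ℝ), ENNReal.ofReal ((m : ℝ) * t ^ (m - 1)) *
          (if max t c ≤ Y ω then 1 else 0) * F ω := by
    intro ω
    rw [lintegral_mul_const' (F ω) _ (hFt ω), auxB hm hc (hY0 ω)]
  simp_rw [step1]
  rw [lintegral_lintegral_swap]
  · refine setLIntegral_congr_fun measurableSet_Ioi (fun t _ => ?_)
    rw [show (fun ω => ENNReal.ofReal ((m : ℝ) * t ^ (m - 1)) *
          (if max t c ≤ Y ω then 1 else 0) * F ω)
        = (fun ω => ENNReal.ofReal ((m : ℝ) * t ^ (m - 1)) *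
          ({ω | max t c ≤ Y ω}.indicator F ω)) from ?_]
    · rw [lintegral_const_mul' _ _ ENNReal.ofReal_ne_top,
        lintegral_indicator (measurableSet_le measurable_const hY)]
    · funext ω
      by_cases h : max t c ≤ Y ω
      · rw [if_pos h, Set.indicator_of_mem (by exact h), mul_one]
      · rw [if_neg h, Set.indicator_of_notMem (by exact h), mul_zero, zero_mul]
  · apply Measurable.aemeasurable
    apply Measurable.mul
    · apply Measurable.mul
      · exact ENNReal.measurable_ofReal.comp ((measurable_snd (α := Ω) (β := ℝ)).pow_const (m-1) |>.const_mul (m:ℝ))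
      · have hset : MeasurableSet {p : Ω × ℝ | max p.2 c ≤ Y p.1} :=
          measurableSet_le ((measurable_snd).max measurable_const) (hY.comp measurable_fst)
        exact Measurable.ite hset measurable_const measurable_const
    · exact hF.comp measurable_fst

lemma auxD {Ω : Type*} [MeasureSpace Ω] [IsProbabilityMeasure (ℙ : Measure Ω)]
    {E : Ω → ℝ} (hE : Measurable E)
    (hexp : ∀ u : ℝ, 0 ≤ u → (ℙ : Measure Ω) {ω | u ≤ |E ω|} = ENNReal.ofReal (Real.exp (-u)))
    (m : ℕ) :
    ∫⁻ ω, ENNReal.ofReal (|E ω| ^ m) ∂(ℙ : Measure Ω) = ENNReal.ofReal ((m.factorial : ℝ)) := by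
  rcases Nat.eq_zero_or_pos m with hm | hm
  · subst hm; simp
  have key := auxC (Ω := Ω) ℙ (Y := fun ω => |E ω|) hE.abs (fun ω => abs_nonneg _)
    (F := fun _ => 1) measurable_const (fun _ => ENNReal.one_ne_top) hm (c := 0) le_rfl
  have lhs_eq : ∫⁻ ω, ENNReal.ofReal (|E ω| ^ m * (if (0:ℝ) ≤ |E ω| then 1 else 0)) * 1 ∂ℙ
      = ∫⁻ ω, ENNReal.ofReal (|E ω| ^ m) ∂ℙ := by
    refine lintegral_congr fun ω => ?_
    rw [if_pos (abs_nonneg _), mul_one, mul_one]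
  rw [lhs_eq] at key
  rw [key, ← auxA hm]
  refine setLIntegral_congr_fun measurableSet_Ioi (fun t ht => ?_)
  have ht' : (0:ℝ) < t := ht
  have h1 : {ω : Ω | max t 0 ≤ |E ω|} = {ω : Ω | t ≤ |E ω|} := by
    simp [max_eq_left ht'.le]
  rw [setLIntegral_one, h1, hexp t ht'.le, ← ENNReal.ofReal_mul (by positivity)]

lemma auxE {Ω : Type*} [MeasureSpace Ω] [IsProbabilityMeasure (ℙ : Measure Ω)]
    {ι : Type*} {g : ι → Ω → ENNReal}
    (hindep : iIndepFun g ℙ) (hg : ∀ i, Measurable (g i))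
    (s : Finset ι) :
    ∫⁻ ω, ∏ i ∈ s, g i ω ∂(ℙ : Measure Ω) = ∏ i ∈ s, ∫⁻ ω, g i ω ∂(ℙ : Measure Ω) := by
  classical
  induction s using Finset.induction_on with
  | empty => simp
  | insert j s' hj ih =>
    rw [Finset.prod_insert hj]
    simp_rw [Finset.prod_insert hj]
    rw [← ih]
    have hIF : IndepFun (∏ i ∈ s', g i) (g j) ℙ :=
      iIndepFun.indepFun_finset_prod_of_notMem hindep hg hj
    have := lintegral_mul_eq_lintegral_mul_lintegral_of_indepFun''
      (μ := (ℙ : Measure Ω)) (f := g j) (g := ∏ i ∈ s', g i)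
      (hg j).aemeasurable (by
        have : Measurable (∏ i ∈ s', g i) := by
          rw [show (∏ i ∈ s', g i) = (fun ω => ∏ i ∈ s', g i ω) from by funext ω; simp]
          exact Finset.measurable_prod s' (fun i _ => hg i)
        exact this.aemeasurable) hIF.symm
    calc ∫⁻ ω, g j ω * ∏ i ∈ s', g i ω ∂(ℙ : Measure Ω)
        = ∫⁻ ω, g j ω * (∏ i ∈ s', g i) ω ∂(ℙ : Measure Ω) := lintegral_congr fun ω => by simp
      _ = (∫⁻ ω, g j ω ∂(ℙ : Measure Ω)) * ∫⁻ ω, (∏ i ∈ s', g i) ω ∂(ℙ : Measure Ω) := this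
      _ = (∫⁻ ω, g j ω ∂(ℙ : Measure Ω)) * ∫⁻ ω, ∏ i ∈ s', g i ω ∂(ℙ : Measure Ω) := by
          congr 1; exact lintegral_congr fun ω => by simp

lemma auxClaim {Ω : Type*} [MeasureSpace Ω] [IsProbabilityMeasure (ℙ : Measure Ω)] {n : ℕ}
    (X : Fin n → Ω → ℝ) (hXm : ∀ i, Measurable (X i))
    (C1 C2 : ℝ) (hC1 : 1 ≤ C1) (hC2 : 0 ≤ C2)
    (htail : ∀ I : Finset (Fin n), ∀ u : Fin n → ℝ, (∀ i ∈ I, C2 ≤ u i) →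
      (ℙ : Measure Ω) {ω | ∀ i ∈ I, C1 * u i ≤ |X i ω|}
        ≤ ENNReal.ofReal (Real.exp (-(∑ i ∈ I, u i))))
    (k : Fin n → ℕ) :
    ∀ J : Finset (Fin n), (∀ i ∈ J, 1 ≤ k i) → ∀ R : Finset (Fin n), Disjoint J R →
    ∀ u : Fin n → ℝ, (∀ i ∈ R, C2 ≤ u i) →
    ∫⁻ ω in {ω | ∀ i ∈ R, u i ≤ |X i ω| / C1},
        ∏ i ∈ J, ENNReal.ofReal ((|X i ω| / C1) ^ (2 * k i)
          * (if C2 ≤ |X i ω| / C1 then 1 else 0)) ∂(ℙ : Measure Ω)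
      ≤ (∏ i ∈ J, ((2 * k i).factorial : ENNReal))
          * ENNReal.ofReal (Real.exp (-∑ i ∈ R, u i)) := by
  classical
  have hC1' : (0:ℝ) < C1 := lt_of_lt_of_le one_pos hC1
  have hSet : ∀ (R : Finset (Fin n)) (u : Fin n → ℝ),
      MeasurableSet {ω : Ω | ∀ i ∈ R, u i ≤ |X i ω| / C1} := by
    intro R u
    have : {ω : Ω | ∀ i ∈ R, u i ≤ |X i ω| / C1}
        = ⋂ i ∈ R, {ω : Ω | u i ≤ |X i ω| / C1} := by
      ext ω; simp
    rw [this]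
    exact MeasurableSet.biInter (R : Set (Fin n)).to_countable
      (fun i _ => measurableSet_le measurable_const ((hXm i).abs.div_const C1))
  have hmeasφ : ∀ i : Fin n, Measurable (fun ω =>
      ENNReal.ofReal ((|X i ω| / C1) ^ (2 * k i) * (if C2 ≤ |X i ω| / C1 then 1 else 0))) := by
    intro i
    apply ENNReal.measurable_ofReal.comp
    apply Measurable.mul
    · exact ((hXm i).abs.div_const C1).pow_const _
    · exact Measurable.ite (measurableSet_le measurable_const ((hXm i).abs.div_const C1))
        measurable_const measurable_const
  intro J
  induction J using Finset.induction_on with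
  | empty =>
    intro _ R _ u hu
    rw [Finset.prod_empty, one_mul]
    simp_rw [Finset.prod_empty]
    rw [setLIntegral_one]
    have : {ω : Ω | ∀ i ∈ R, u i ≤ |X i ω| / C1} = {ω : Ω | ∀ i ∈ R, C1 * u i ≤ |X i ω|} := by
      ext ω
      simp only [Set.mem_setOf_eq]
      refine forall₂_congr fun i _ => ?_
      rw [le_div_iff₀ hC1', mul_comm]
    rw [this]
    exact htail R u hu
  | insert j J' hj ih =>
    intro hk R hdisj u hu
    have hjR : j ∉ R := (Finset.disjoint_insert_left.mp hdisj).1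
    have hdisj' : Disjoint J' R := (Finset.disjoint_insert_left.mp hdisj).2
    have hkj : 1 ≤ 2 * k j := by have := hk j (Finset.mem_insert_self j J'); omega
    have hkJ' : ∀ i ∈ J', 1 ≤ k i := fun i hi => hk i (Finset.mem_insert_of_mem hi)
    set m := 2 * k j with hm_def
    set S := {ω : Ω | ∀ i ∈ R, u i ≤ |X i ω| / C1} with hS_def
    set F : Ω → ENNReal := fun ω => ∏ i ∈ J', ENNReal.ofReal ((|X i ω| / C1) ^ (2 * k i)
      * (if C2 ≤ |X i ω| / C1 then 1 else 0)) with hF_def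
    have hFmeas : Measurable F := Finset.measurable_prod _ (fun i _ => hmeasφ i)
    have hFt : ∀ ω, F ω ≠ ⊤ :=
      fun ω => (ENNReal.prod_lt_top (fun i _ => ENNReal.ofReal_lt_top)).ne
    set P : ENNReal := ∏ i ∈ J', ((2 * k i).factorial : ENNReal) with hP_def
    have hPt : P ≠ ⊤ := (ENNReal.prod_lt_top (fun i _ => ENNReal.natCast_lt_top _)).ne
    have hYmeas : Measurable (fun ω => |X j ω| / C1) := (hXm j).abs.div_const C1
    have inner_bound : ∀ t : ℝ,
        ∫⁻ ω in {ω | max t C2 ≤ |X j ω| / C1}, F ω ∂((ℙ : Measure Ω).restrict S)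
          ≤ P * ENNReal.ofReal (Real.exp (-(max t C2 + ∑ i ∈ R, u i))) := by
      intro t
      rw [Measure.restrict_restrict (measurableSet_le measurable_const hYmeas)]
      have hseteq : {ω : Ω | max t C2 ≤ |X j ω| / C1} ∩ S
          = {ω : Ω | ∀ i ∈ insert j R, (Function.update u j (max t C2)) i ≤ |X i ω| / C1} := by
        ext ω
        simp only [Set.mem_inter_iff, Set.mem_setOf_eq, Finset.mem_insert, hS_def]
        constructor
        · rintro ⟨h1, h2⟩ i hi
          rcases hi with rfl | hi
          · rwa [Function.update_self]
          · rw [Function.update_of_ne (by rintro rfl; exact hjR hi)]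
            exact h2 i hi
        · intro h
          refine ⟨by have := h j (Or.inl rfl); rwa [Function.update_self] at this,
            fun i hi => ?_⟩
          have := h i (Or.inr hi)
          rwa [Function.update_of_ne (by rintro rfl; exact hjR hi)] at this
      rw [hseteq]
      have := ih hkJ' (insert j R)
        (Finset.disjoint_insert_right.mpr ⟨hj, hdisj'⟩)
        (Function.update u j (max t C2))
        (fun i hi => by
          rcases Finset.mem_insert.mp hi with rfl | hi'
          · rw [Function.update_self]; exact le_max_right _ _
          · rw [Function.update_of_ne (by rintro rfl; exact hjR hi')]; exact hu i hi')
      have hsum : ∑ i ∈ insert j R, (Function.update u j (max t C2)) i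
          = max t C2 + ∑ i ∈ R, u i := by
        rw [Finset.sum_insert hjR, Function.update_self]
        congr 1
        exact Finset.sum_congr rfl fun i hi => by
          rw [Function.update_of_ne (show i ≠ j from by rintro rfl; exact hjR hi)]
      rw [hsum] at this
      exact this
    calc ∫⁻ ω in S, ∏ i ∈ insert j J', ENNReal.ofReal ((|X i ω| / C1) ^ (2 * k i)
            * (if C2 ≤ |X i ω| / C1 then 1 else 0)) ∂(ℙ : Measure Ω)
        = ∫⁻ ω, ENNReal.ofReal ((|X j ω| / C1) ^ m * (if C2 ≤ |X j ω| / C1 then 1 else 0))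
            * F ω ∂((ℙ : Measure Ω).restrict S) := by
          refine lintegral_congr fun ω => ?_
          rw [Finset.prod_insert hj]
      _ = ∫⁻ t in Set.Ioi (0:ℝ), ENNReal.ofReal ((m : ℝ) * t ^ (m - 1)) *
            ∫⁻ ω in {ω | max t C2 ≤ |X j ω| / C1}, F ω ∂((ℙ : Measure Ω).restrict S) :=
          auxC _ hYmeas (fun ω => div_nonneg (abs_nonneg _) hC1'.le) hFmeas hFt hkj hC2
      _ ≤ ∫⁻ t in Set.Ioi (0:ℝ), (P * ENNReal.ofReal (Real.exp (-∑ i ∈ R, u i)))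
            * ENNReal.ofReal ((m : ℝ) * t ^ (m - 1) * Real.exp (-t)) := by
          refine setLIntegral_mono (by fun_prop) (fun t ht => ?_)
          have ht' : (0:ℝ) < t := ht
          calc ENNReal.ofReal ((m : ℝ) * t ^ (m - 1)) *
                ∫⁻ ω in {ω | max t C2 ≤ |X j ω| / C1}, F ω ∂((ℙ : Measure Ω).restrict S)
              ≤ ENNReal.ofReal ((m : ℝ) * t ^ (m - 1)) *
                (P * ENNReal.ofReal (Real.exp (-(max t C2 + ∑ i ∈ R, u i)))) :=
                mul_le_mul_right (inner_bound t) _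
            _ = (P * ENNReal.ofReal (Real.exp (-∑ i ∈ R, u i))) *
                ENNReal.ofReal ((m : ℝ) * t ^ (m - 1) * Real.exp (-(max t C2))) := by
                rw [show -(max t C2 + ∑ i ∈ R, u i) = -(max t C2) + (-∑ i ∈ R, u i) by ring,
                  Real.exp_add]
                rw [ENNReal.ofReal_mul (le_of_lt (Real.exp_pos _))]
                rw [show ENNReal.ofReal ((m : ℝ) * t ^ (m - 1) * Real.exp (-(max t C2)))
                    = ENNReal.ofReal ((m : ℝ) * t ^ (m - 1))
                      * ENNReal.ofReal (Real.exp (-(max t C2))) from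
                  ENNReal.ofReal_mul (by positivity)]
                ring
            _ ≤ (P * ENNReal.ofReal (Real.exp (-∑ i ∈ R, u i))) *
                ENNReal.ofReal ((m : ℝ) * t ^ (m - 1) * Real.exp (-t)) := by
                refine mul_le_mul_right (ENNReal.ofReal_le_ofReal ?_) _
                have : Real.exp (-(max t C2)) ≤ Real.exp (-t) :=
                  Real.exp_le_exp.mpr (neg_le_neg (le_max_left _ _))
                have hnn : (0:ℝ) ≤ (m : ℝ) * t ^ (m - 1) := by positivity
                exact mul_le_mul_of_nonneg_left this hnn
      _ = (P * ENNReal.ofReal (Real.exp (-∑ i ∈ R, u i)))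
            * ENNReal.ofReal ((m.factorial : ℝ)) := by
          rw [lintegral_const_mul' _ _ (by
            exact ENNReal.mul_ne_top hPt ENNReal.ofReal_ne_top), auxA hkj]
      _ = (∏ i ∈ insert j J', ((2 * k i).factorial : ENNReal))
            * ENNReal.ofReal (Real.exp (-∑ i ∈ R, u i)) := by
          rw [Finset.prod_insert hj, ENNReal.ofReal_natCast]
          ring

theorem moment_domination_by_exponentials {Ω : Type*} [MeasureSpace Ω]
    [IsProbabilityMeasure (ℙ : Measure Ω)]
    {n : ℕ} (X E : Fin n → Ω → ℝ)
    (hXm : ∀ i, Measurable (X i)) (hEm : ∀ i, Measurable (E i))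
    (C1 C2 : ℝ) (hC1 : 1 ≤ C1) (hC2 : 0 ≤ C2)
    (htail : ∀ I : Finset (Fin n), ∀ u : Fin n → ℝ, (∀ i ∈ I, C2 ≤ u i) →
      ℙ {ω | ∀ i ∈ I, C1 * u i ≤ |X i ω|} ≤ ENNReal.ofReal (Real.exp (-(∑ i ∈ I, u i))))
    (hindep : iIndepFun E ℙ)
    (hexp : ∀ i, ∀ u : ℝ, 0 ≤ u → ℙ {ω | u ≤ |E i ω|} = ENNReal.ofReal (Real.exp (-u)))
    (I : Finset (Fin n)) (k : Fin n → ℕ) :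
    ∫ ω, (∏ i ∈ I, |X i ω| ^ (2 * k i)) *
        ∏ i ∈ I, (if C1 * C2 < |X i ω| then (1 : ℝ) else 0) ∂ℙ
      ≤ C1 ^ (2 * ∑ i ∈ I, k i) * ∫ ω, ∏ i ∈ I, |E i ω| ^ (2 * k i) ∂ℙ := by
  classical
  have hC1' : (0:ℝ) < C1 := lt_of_lt_of_le one_pos hC1
  set p : ℕ := 2 * ∑ i ∈ I, k i with hp_def
  -- Part 1 : the RHS integral equals the product of factorials
  have hRHS : ∫ ω, ∏ i ∈ I, |E i ω| ^ (2 * k i) ∂ℙ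
      = ∏ i ∈ I, (((2 * k i).factorial : ℝ)) := by
    set g : Fin n → Ω → ENNReal := fun i ω => ENNReal.ofReal (|E i ω| ^ (2 * k i)) with hg_def
    have hgmeas : ∀ i, Measurable (g i) := fun i =>
      ENNReal.measurable_ofReal.comp ((hEm i).abs.pow_const _)
    have hgindep : iIndepFun g ℙ := by
      exact hindep.comp (fun i x => ENNReal.ofReal (|x| ^ (2 * k i)))
        (fun i => ENNReal.measurable_ofReal.comp (measurable_abs.pow_const _))
    have h1 : ∫⁻ ω, ENNReal.ofReal (∏ i ∈ I, |E i ω| ^ (2 * k i)) ∂ℙ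
        = ENNReal.ofReal (∏ i ∈ I, (((2 * k i).factorial : ℝ))) := by
      have hpt : ∀ ω, ENNReal.ofReal (∏ i ∈ I, |E i ω| ^ (2 * k i)) = ∏ i ∈ I, g i ω :=
        fun ω => ENNReal.ofReal_prod_of_nonneg (fun i _ => by positivity)
      simp_rw [hpt]
      rw [auxE hgindep hgmeas I]
      rw [ENNReal.ofReal_prod_of_nonneg (fun i _ => by positivity)]
      exact Finset.prod_congr rfl fun i _ => auxD (hEm i) (hexp i) (2 * k i)
    rw [integral_eq_lintegral_of_nonneg_ae
      (Filter.Eventually.of_forall fun ω => by positivity)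
      (Measurable.aestronglyMeasurable (by
        exact Finset.measurable_prod I (fun i _ => (hEm i).abs.pow_const _)))]
    rw [h1, ENNReal.toReal_ofReal (by positivity)]
  -- Part 2 : bound the LHS
  set f : Ω → ℝ := fun ω => (∏ i ∈ I, |X i ω| ^ (2 * k i)) *
      ∏ i ∈ I, (if C1 * C2 < |X i ω| then (1 : ℝ) else 0) with hf_def
  have hf0 : ∀ ω, 0 ≤ f ω := by
    intro ω
    apply mul_nonneg
    · exact Finset.prod_nonneg fun i _ => by positivity
    · exact Finset.prod_nonneg fun i _ => by split <;> norm_num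
  have hfmeas : Measurable f := by
    apply Measurable.mul
    · exact Finset.measurable_prod I (fun i _ => (hXm i).abs.pow_const _)
    · exact Finset.measurable_prod I (fun i _ => Measurable.ite
        (measurableSet_lt measurable_const (hXm i).abs) measurable_const measurable_const)
  set φ : Fin n → Ω → ℝ := fun i ω => (|X i ω| / C1) ^ (2 * k i)
      * (if C2 ≤ |X i ω| / C1 then 1 else 0) with hφ_def
  have hφ0 : ∀ i ω, 0 ≤ φ i ω := fun i ω => by
    apply mul_nonneg (by positivity); split <;> norm_num
  set I0 : Finset (Fin n) := I.filter (fun i => 1 ≤ k i) with hI0_def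
  -- pointwise bound
  have hpoint : ∀ ω, ENNReal.ofReal (f ω)
      ≤ ENNReal.ofReal (C1 ^ p) * ∏ i ∈ I0, ENNReal.ofReal (φ i ω) := by
    intro ω
    have hreal : f ω ≤ C1 ^ p * ∏ i ∈ I, φ i ω := by
      have hfeq : f ω = ∏ i ∈ I, (|X i ω| ^ (2 * k i)
          * (if C1 * C2 < |X i ω| then (1 : ℝ) else 0)) := by
        rw [hf_def, Finset.prod_mul_distrib]
      have hCp : C1 ^ p = ∏ i ∈ I, C1 ^ (2 * k i) := by
        rw [Finset.prod_pow_eq_pow_sum, hp_def, Finset.mul_sum]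
      rw [hfeq, hCp, ← Finset.prod_mul_distrib]
      refine Finset.prod_le_prod (fun i _ => by apply mul_nonneg (by positivity); split <;> norm_num)
        (fun i _ => ?_)
      simp only [hφ_def]
      by_cases h : C1 * C2 < |X i ω|
      · have h' : C2 ≤ |X i ω| / C1 := by
          rw [le_div_iff₀ hC1', mul_comm]; exact h.le
        rw [if_pos h, if_pos h', mul_one, mul_one, div_pow]
        rw [mul_div_cancel₀]
        exact pow_ne_zero _ (ne_of_gt hC1')
      · rw [if_neg h, mul_zero]
        apply mul_nonneg (by positivity)
        apply mul_nonneg (by positivity)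
        split <;> norm_num
    calc ENNReal.ofReal (f ω) ≤ ENNReal.ofReal (C1 ^ p * ∏ i ∈ I, φ i ω) :=
          ENNReal.ofReal_le_ofReal hreal
      _ = ENNReal.ofReal (C1 ^ p) * ∏ i ∈ I, ENNReal.ofReal (φ i ω) := by
          rw [ENNReal.ofReal_mul (by positivity),
            ENNReal.ofReal_prod_of_nonneg (fun i _ => hφ0 i ω)]
      _ ≤ ENNReal.ofReal (C1 ^ p) * ∏ i ∈ I0, ENNReal.ofReal (φ i ω) := by
          refine mul_le_mul_right ?_ _
          rw [← Finset.prod_filter_mul_prod_filter_not I (fun i => 1 ≤ k i)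
            (fun i => ENNReal.ofReal (φ i ω))]
          have h2 : ∏ i ∈ I.filter (fun i => ¬ 1 ≤ k i), ENNReal.ofReal (φ i ω) ≤ 1 := by
            refine Finset.prod_le_one (fun i _ => bot_le) (fun i hi => ?_)
            have hki : k i = 0 := by
              have := (Finset.mem_filter.mp hi).2; omega
            rw [ENNReal.ofReal_le_one, hφ_def]
            simp only [hki, Nat.mul_zero, pow_zero, one_mul]
            split <;> norm_num
          calc (∏ i ∈ I0, ENNReal.ofReal (φ i ω)) *
                ∏ i ∈ I.filter (fun i => ¬ 1 ≤ k i), ENNReal.ofReal (φ i ω)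
              ≤ (∏ i ∈ I0, ENNReal.ofReal (φ i ω)) * 1 := mul_le_mul_right h2 _
            _ = ∏ i ∈ I0, ENNReal.ofReal (φ i ω) := mul_one _
  -- claim applied
  have hclaim := auxClaim X hXm C1 C2 hC1 hC2 htail k I0
    (fun i hi => (Finset.mem_filter.mp hi).2) ∅ (Finset.disjoint_empty_right _)
    (fun _ => C2) (fun i hi => absurd hi (Finset.notMem_empty i))
  have huniv : {ω : Ω | ∀ i ∈ (∅ : Finset (Fin n)), (fun _ => C2) i ≤ |X i ω| / C1}
      = Set.univ := by ext ω; simp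
  rw [huniv, Measure.restrict_univ, Finset.sum_empty, neg_zero, Real.exp_zero,
    ENNReal.ofReal_one, mul_one] at hclaim
  have hbound : ∫⁻ ω, ENNReal.ofReal (f ω) ∂ℙ
      ≤ ENNReal.ofReal (C1 ^ p) * ∏ i ∈ I0, ((2 * k i).factorial : ENNReal) := by
    calc ∫⁻ ω, ENNReal.ofReal (f ω) ∂ℙ
        ≤ ∫⁻ ω, ENNReal.ofReal (C1 ^ p) * ∏ i ∈ I0, ENNReal.ofReal (φ i ω) ∂ℙ :=
          lintegral_mono hpoint
      _ = ENNReal.ofReal (C1 ^ p) * ∫⁻ ω, ∏ i ∈ I0, ENNReal.ofReal (φ i ω) ∂ℙ :=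
          lintegral_const_mul' _ _ ENNReal.ofReal_ne_top
      _ ≤ ENNReal.ofReal (C1 ^ p) * ∏ i ∈ I0, ((2 * k i).factorial : ENNReal) :=
          mul_le_mul_right hclaim _
  have hfactprod : ∏ i ∈ I0, ((2 * k i).factorial : ENNReal)
      = ∏ i ∈ I, ((2 * k i).factorial : ENNReal) := by
    rw [← Finset.prod_filter_mul_prod_filter_not I (fun i => 1 ≤ k i)
      (fun i => ((2 * k i).factorial : ENNReal))]
    have : ∏ i ∈ I.filter (fun i => ¬ 1 ≤ k i), ((2 * k i).factorial : ENNReal) = 1 := by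
      refine Finset.prod_eq_one (fun i hi => ?_)
      have hki : k i = 0 := by have := (Finset.mem_filter.mp hi).2; omega
      simp [hki]
    rw [this, mul_one]
  have hcast : ∏ i ∈ I, ((2 * k i).factorial : ENNReal)
      = ENNReal.ofReal (∏ i ∈ I, (((2 * k i).factorial : ℝ))) := by
    rw [ENNReal.ofReal_prod_of_nonneg (fun i _ => by positivity)]
    exact Finset.prod_congr rfl fun i _ => (ENNReal.ofReal_natCast _).symm
  rw [hfactprod, hcast, ← ENNReal.ofReal_mul (by positivity)] at hbound
  have hLHS : ∫ ω, f ω ∂ℙ = (∫⁻ ω, ENNReal.ofReal (f ω) ∂ℙ).toReal :=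
    integral_eq_lintegral_of_nonneg_ae (Filter.Eventually.of_forall hf0)
      hfmeas.aestronglyMeasurable
  calc ∫ ω, (∏ i ∈ I, |X i ω| ^ (2 * k i)) *
        ∏ i ∈ I, (if C1 * C2 < |X i ω| then (1 : ℝ) else 0) ∂ℙ
      = (∫⁻ ω, ENNReal.ofReal (f ω) ∂ℙ).toReal := hLHS
    _ ≤ (ENNReal.ofReal (C1 ^ p * ∏ i ∈ I, (((2 * k i).factorial : ℝ)))).toReal :=
        ENNReal.toReal_mono ENNReal.ofReal_ne_top hbound
    _ = C1 ^ p * ∏ i ∈ I, (((2 * k i).factorial : ℝ)) :=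
        ENNReal.toReal_ofReal (by positivity)
    _ = C1 ^ (2 * ∑ i ∈ I, k i) * ∫ ω, ∏ i ∈ I, |E i ω| ^ (2 * k i) ∂ℙ := by
        rw [hRHS]
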